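/- Fix λ ⊢ n, 1 ≤ k ≤ n, and a standard Young tableau S of shape λ. The map I ↦ h^S_I is a bijection from the collection {I : Dsi^c(S) ⊆ I ⊆ {1,…,n−1}, |I| = k−1} onto the set H^S_k of all vectors h = (h_r)_{r=1}^n of non-negative integers satisfying h_r = 0 for every r > n−k and Σ_{r=1}^{n−k} h_r < k − |Dsi^c(S)|. -/

import Mathlib

open MvPolynomial

noncomputable section

namespace HigherSpecht

open scoped Classical

/-- A tableau: a filling of the plane (row, column), `0`-indexed, with `0` outside the diagram. -/
abbrev Tab := ℕ × ℕ → ℕ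

/-- A permutation of `ℕ` represents an element of `Sₙ` (acting on `{1, …, n}`)
when it fixes `0` and everything above `n`. -/
def SuppIn (n : ℕ) (w : Equiv.Perm ℕ) : Prop := ∀ i, i = 0 ∨ n < i → w i = i

/-- Descending locations of a permutation (one-line notation `w 1, …, w n`). -/
def DslSet (n : ℕ) (w : Equiv.Perm ℕ) : Finset ℕ :=
  (Finset.Ioo 0 n).filter fun i => w (i + 1) < w i

/-- Ascending locations of a permutation. -/
def AslSet (n : ℕ) (w : Equiv.Perm ℕ) : Finset ℕ :=
  (Finset.Ioo 0 n).filter fun i => w i < w (i + 1)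

/-- The row in which the entry `i` shows up in a tableau. -/
def rowIdx (T : Tab) (i : ℕ) : ℕ := sInf {r | ∃ c, T (r, c) = i}

/-- The column in which the entry `i` shows up in a tableau. -/
def colIdx (T : Tab) (i : ℕ) : ℕ := sInf {c | T (rowIdx T i, c) = i}

/-- The box containing the entry `i`. -/
def posOf (T : Tab) (i : ℕ) : ℕ × ℕ := (rowIdx T i, colIdx T i)

/-- Descending indices of a (standard) tableau: `i` with the row of `i+1` strictly below
the row of `i`. -/
def DsiSet (n : ℕ) (T : Tab) : Finset ℕ :=
  (Finset.Ioo 0 n).filter fun i => rowIdx T i < rowIdx T (i + 1)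

/-- `Dsi^c`, the complemented descent set `{n - i | i ∈ Dsi}`. -/
def Dsic (n : ℕ) (T : Tab) : Finset ℕ := (DsiSet n T).image fun i => n - i

/-- The entry of `ct_J(S)` at a box `c`: the number of elements of `J` smaller than the
entry of `S` at `c`. -/
def ctEntry (T : Tab) (J : Finset ℕ) (c : ℕ × ℕ) : ℕ := (J.filter fun j => j < T c).card

/-- The cocharge tableau `ct(S)` of a standard tableau. -/
def ctTab (n : ℕ) (T : Tab) : Tab := fun c => ctEntry T (DsiSet n T) c

/-- The (total) cocharge `cc(S)`: the sum of the entries of `ct(S)`. -/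
def ccStat (n : ℕ) (T : Tab) : ℕ :=
  ∑ i ∈ Finset.Icc 1 n, ctEntry T (DsiSet n T) (posOf T i)

/-- `T` is a bijective filling of the given set of cells by `1, …, n` (`n` the number of
cells), with `0` outside. -/
def IsFillingF (cells : Finset (ℕ × ℕ)) (T : Tab) : Prop :=
  (∀ c, c ∉ cells → T c = 0) ∧ Set.BijOn T ↑cells (Set.Icc 1 cells.card)

/-- A bijective filling of a Young diagram. -/
def IsFilling (μ : YoungDiagram) (T : Tab) : Prop := IsFillingF μ.cells T

/-- A standard Young tableau of shape `μ`: entries strictly increase along rows and columns. -/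
def IsStandard (μ : YoungDiagram) (T : Tab) : Prop :=
  IsFilling μ T ∧ ∀ c₁ ∈ μ.cells, ∀ c₂ ∈ μ.cells,
    c₁ ≠ c₂ → c₁.1 ≤ c₂.1 → c₁.2 ≤ c₂.2 → T c₁ < T c₂

/-! ### Robinson–Schensted -/

/-- Row insertion: insert `x` into a row, returning the new row and the bumped entry. -/
def rowInsert : ℕ → List ℕ → List ℕ × Option ℕ
  | x, [] => ([x], none)
  | x, y :: ys =>
    if x < y then (x :: ys, some y)
    else
      let p := rowInsert x ys
      (y :: p.1, p.2)

/-- Insertion of an entry into a tableau, given as a list of rows. -/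
def tabInsert : List (List ℕ) → ℕ → List (List ℕ)
  | [], x => [[x]]
  | r :: rs, x =>
    match rowInsert x r with
    | (r', none) => r' :: rs
    | (r', some y) => r' :: tabInsert rs y

/-- One-line notation of `w ∈ Sₙ`. -/
def oneLine (n : ℕ) (w : Equiv.Perm ℕ) : List ℕ := (List.range n).map fun i => w (i + 1)

/-- The insertion tableau of the first `m` letters of `w`, as a list of rows. -/
def PtabListPart (n : ℕ) (w : Equiv.Perm ℕ) (m : ℕ) : List (List ℕ) :=
  ((oneLine n w).take m).foldl tabInsert []

/-- Entry of a list-of-rows tableau at a (0-indexed) cell. -/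
def listEntry (t : List (List ℕ)) (c : ℕ × ℕ) : ℕ := (t.getD c.1 []).getD c.2 0

/-- The Robinson–Schensted insertion tableau `P(w)`. -/
def Ptab (n : ℕ) (w : Equiv.Perm ℕ) : Tab := fun c => listEntry (PtabListPart n w n) c

/-- The Robinson–Schensted recording tableau `Q(w)`: the entry of a cell is the step at
which the cell is added to the shape. -/
def Qtab (n : ℕ) (w : Equiv.Perm ℕ) : Tab := fun c =>
  sInf {m | listEntry (PtabListPart n w m) c ≠ 0}

/-! ### Schützenberger evacuation -/

/-- One step of a jeu de taquin slide into the hole at `c`. -/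
def slideOnce (T : Tab) (c : ℕ × ℕ) : Tab × (ℕ × ℕ) :=
  let rc : ℕ × ℕ := (c.1, c.2 + 1)
  let dc : ℕ × ℕ := (c.1 + 1, c.2)
  if T rc = 0 ∧ T dc = 0 then (T, c)
  else if T dc = 0 ∨ (T rc ≠ 0 ∧ T rc < T dc) then
    (Function.update (Function.update T c (T rc)) rc 0, rc)
  else
    (Function.update (Function.update T c (T dc)) dc 0, dc)

/-- Jeu de taquin slide (with fuel). -/
def slide : ℕ → Tab → ℕ × ℕ → Tab × (ℕ × ℕ)
  | 0, T, c => (T, c)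
  | k + 1, T, c =>
    let p := slideOnce T c
    if p.2 = c then (T, c) else slide k p.1 p.2

/-- The Schützenberger evacuation: repeatedly delete the minimal entry, slide into the hole,
decrement the remaining entries, and record the vacated cell. -/
def evacAux : ℕ → Tab → Tab
  | 0, _ => fun _ => 0
  | m + 1, T =>
    let c0 := posOf T 1
    let p := slide (m + 1) (Function.update T c0 0) c0
    Function.update (evacAux m fun c => p.1 c - 1) p.2 (m + 1)

/-- The evacuation tableau `ev S` of a standard tableau with `n` boxes. -/
def evac (n : ℕ) (T : Tab) : Tab := evacAux n T

/-- `Q̃(w) := ev (Q w)`. -/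
def Qt (n : ℕ) (w : Equiv.Perm ℕ) : Tab := evac n (Qtab n w)

/-! ### Row and column groups, higher Specht polynomials -/

/-- The identification of `Fin n` with `{1, …, n} ⊆ ℕ`. -/
def finShift (n : ℕ) : Fin n ≃ {i : ℕ // 1 ≤ i ∧ i ≤ n} where
  toFun j := ⟨(j : ℕ) + 1, by have := j.isLt; omega⟩
  invFun i := ⟨(i : ℕ) - 1, by have := i.2; omega⟩
  left_inv j := by apply Fin.ext; simp
  right_inv i := by apply Subtype.ext; have := i.2; simp; omega

/-- Embedding of the permutations of `Fin n` into permutations of `ℕ` (acting on `{1, …, n}`). -/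
def embedPerm (n : ℕ) (σ : Equiv.Perm (Fin n)) : Equiv.Perm ℕ :=
  σ.extendDomain (finShift n)

/-- The row group `R(T)` of a filling, as a finset of permutations of `Fin n`. -/
def rowFinset (n : ℕ) (T : Tab) : Finset (Equiv.Perm (Fin n)) :=
  Finset.univ.filter fun τ => ∀ i ∈ Finset.Icc 1 n, rowIdx T (embedPerm n τ i) = rowIdx T i

/-- The column group `C(T)` of a filling, as a finset of permutations of `Fin n`. -/
def colFinset (n : ℕ) (T : Tab) : Finset (Equiv.Perm (Fin n)) :=
  Finset.univ.filter fun σ => ∀ i ∈ Finset.Icc 1 n, colIdx T (embedPerm n σ i) = colIdx T i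

/-- The row group `R(T)` as a set of permutations of `ℕ`. -/
def rowGroupSet (n : ℕ) (T : Tab) : Set (Equiv.Perm ℕ) :=
  {w | SuppIn n w ∧ ∀ i ∈ Finset.Icc 1 n, rowIdx T (w i) = rowIdx T i}

/-- The column group `C(T)` as a set of permutations of `ℕ`. -/
def colGroupSet (n : ℕ) (T : Tab) : Set (Equiv.Perm ℕ) :=
  {w | SuppIn n w ∧ ∀ i ∈ Finset.Icc 1 n, colIdx T (w i) = colIdx T i}

/-- The Young symmetrizer `ε_T = Σ_{σ ∈ C(T)} Σ_{τ ∈ R(T)} sgn(σ) σ τ` acting on polynomials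
(permutations acting by permuting the variables). -/
def epsAct (n : ℕ) (T : Tab) (p : MvPolynomial ℕ ℚ) : MvPolynomial ℕ ℚ :=
  ∑ σ ∈ colFinset n T, ∑ τ ∈ rowFinset n T,
    (Equiv.Perm.sign σ : ℤ) • rename (⇑(embedPerm n σ * embedPerm n τ)) p

/-- The monomial `p_T^S = Π_i x_i^{h_i}`, where `h_i` is the entry of `ct S` in the box of
`T` containing `i`. -/
def pTS (n : ℕ) (T S : Tab) : MvPolynomial ℕ ℚ :=
  ∏ i ∈ Finset.Icc 1 n, X i ^ ctEntry S (DsiSet n S) (posOf T i)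

/-- `s_T^S`: the order of the stabilizer of `p_T^S` in `R(T)`. -/
def sTS (n : ℕ) (T S : Tab) : ℕ :=
  ((rowFinset n T).filter fun τ =>
    rename (⇑(embedPerm n τ)) (pTS n T S) = pTS n T S).card

/-- The higher Specht polynomial `F_T^S := ε_T p_T^S / s_T^S`. -/
def FTS (n : ℕ) (T S : Tab) : MvPolynomial ℕ ℚ :=
  ((sTS n T S : ℚ)⁻¹) • epsAct n T (pTS n T S)

/-- The higher Specht polynomial `F_w := F_{P(w)}^{Q̃(w)}` of a permutation. -/
def Fw (n : ℕ) (w : Equiv.Perm ℕ) : MvPolynomial ℕ ℚ := FTS n (Ptab n w) (Qt n w)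

/-- The elementary symmetric polynomial `e_r` in the variables `x_1, …, x_n`. -/
def esym (n r : ℕ) : MvPolynomial ℕ ℚ :=
  ∑ s ∈ (Finset.Icc 1 n).powersetCard r, ∏ i ∈ s, X i

/-- The representation `V^S`: the span of the higher Specht polynomials `F_T^S` over all
bijective fillings `T` of the given cells. -/
def VS (n : ℕ) (cells : Finset (ℕ × ℕ)) (S : Tab) : Submodule ℚ (MvPolynomial ℕ ℚ) :=
  Submodule.span ℚ {p | ∃ T : Tab, IsFillingF cells T ∧ p = FTS n T S}

/-- Multiplication of a subspace of polynomials by a fixed polynomial. -/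
def polyMul (q : MvPolynomial ℕ ℚ) (V : Submodule ℚ (MvPolynomial ℕ ℚ)) :
    Submodule ℚ (MvPolynomial ℕ ℚ) :=
  Submodule.map (LinearMap.mulLeft ℚ q) V

/-- The symmetric multiplier `Π_r e_r^{h_r}`. -/
def eProd (n : ℕ) (h : ℕ → ℕ) : MvPolynomial ℕ ℚ := ∏ r ∈ Finset.Icc 1 n, esym n r ^ h r

/-- `V^S_h := (Π_r e_r^{h_r}) V^S`. -/
def VSh (n : ℕ) (cells : Finset (ℕ × ℕ)) (S : Tab) (h : ℕ → ℕ) :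
    Submodule ℚ (MvPolynomial ℕ ℚ) :=
  polyMul (eProd n h) (VS n cells S)

/-! ### The representations `R_{n,I}` -/

/-- For `i ∈ I`, `r_i := #{j ∈ {1,…,n-1} \ I : j < i}`. -/
def rIdxI (n : ℕ) (I : Finset ℕ) (i : ℕ) : ℕ :=
  ((Finset.Ioo 0 n \ I).filter fun j => j < i).card

/-- The vector `h^S_I`, whose `r`-th entry (for `r ≥ 1`) is `#{i ∈ I \ Dsi^c(S) : r_i = r}`. -/
def hSI (n : ℕ) (I : Finset ℕ) (S : Tab) : ℕ → ℕ := fun r =>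
  if 1 ≤ r then ((I \ Dsic n S).filter fun i => rIdxI n I i = r).card else 0

/-- The indicator vector `h(I,S)` of the set `I \ Dsi^c(S)`. -/
def hInd (n : ℕ) (I : Finset ℕ) (S : Tab) : ℕ → ℕ := fun r =>
  if r ∈ I \ Dsic n S then 1 else 0

/-- `F_{w,I} := F_w · Π_{i ∈ I \ Dsl(w)} e_{r_i}`. -/
def FwI (n : ℕ) (I : Finset ℕ) (w : Equiv.Perm ℕ) : MvPolynomial ℕ ℚ :=
  Fw n w * ∏ i ∈ I \ DslSet n w, esym n (rIdxI n I i)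

/-- The homogeneous version `F^hom_{w,I} := F_w · Π_{i ∈ I \ Dsl(w)} e_i`. -/
def FwIhom (n : ℕ) (I : Finset ℕ) (w : Equiv.Perm ℕ) : MvPolynomial ℕ ℚ :=
  Fw n w * ∏ i ∈ I \ DslSet n w, esym n i

/-- The representation `R_{n,I}`: span of the `F_{w,I}` over `w` with `Dsl(w) ⊆ I`. -/
def RnI (n : ℕ) (I : Finset ℕ) : Submodule ℚ (MvPolynomial ℕ ℚ) :=
  Submodule.span ℚ {p | ∃ w : Equiv.Perm ℕ, SuppIn n w ∧ DslSet n w ⊆ I ∧ p = FwI n I w}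

/-- The homogeneous representation `R^hom_{n,I}`. -/
def RnIhom (n : ℕ) (I : Finset ℕ) : Submodule ℚ (MvPolynomial ℕ ℚ) :=
  Submodule.span ℚ {p | ∃ w : Equiv.Perm ℕ, SuppIn n w ∧ DslSet n w ⊆ I ∧ p = FwIhom n I w}

/-- The index type for the decomposition of `R_{n,I}`: pairs of a partition `λ ⊢ n` and a
standard Young tableau `S` of shape `λ` with `Dsi^c(S) ⊆ I`. -/
def SIdx (n : ℕ) (I : Finset ℕ) : Type :=
  {q : YoungDiagram × Tab // q.1.cells.card = n ∧ IsStandard q.1 q.2 ∧ Dsic n q.2 ⊆ I}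

/-! ### Ordered set partitions -/

/-- The cumulative values `j_h` attached to a subset `I ⊆ {1,…,n-1}` (`j_0 = 0`,
`j_h` the `h`-th smallest element, `j_{|I|+1} = n`). -/
def jval (n : ℕ) (I : Finset ℕ) (h : ℕ) : ℕ :=
  if h = 0 then 0 else if h ≤ I.card then (I.sort (· ≤ ·)).getD (h - 1) 0 else n

/-- The composition `comp_n I`, as a function of the index `0 ≤ h ≤ |I|`. -/
def compFun (n : ℕ) (I : Finset ℕ) (h : ℕ) : ℕ := jval n I (h + 1) - jval n I h

/-- The set `OP_{n,I}` of ordered set partitions of `{1,…,n}` into `|I| + 1` blocks whose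
sizes are given by `comp_n I` (blocks indexed by `ℕ`, empty from index `|I| + 1` on). -/
def OPset (n : ℕ) (I : Finset ℕ) : Set (ℕ → Finset ℕ) :=
  {B | (∀ h, I.card + 1 ≤ h → B h = ∅) ∧
       (∀ h₁ h₂, h₁ ≠ h₂ → Disjoint (B h₁) (B h₂)) ∧
       (∀ h ≤ I.card, (B h).card = compFun n I h) ∧
       Finset.Icc 1 n = (Finset.range (I.card + 1)).biUnion B}

/-- The natural action of a permutation on an ordered set partition. -/
def permOP (w : Equiv.Perm ℕ) (B : ℕ → Finset ℕ) : ℕ → Finset ℕ := fun h => (B h).image w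

/-! ### The quotient `R_{n,k}` -/

/-- Elementary symmetric polynomials in `Fin n` variables. -/
def esymFin (n r : ℕ) : MvPolynomial (Fin n) ℚ :=
  ∑ s ∈ (Finset.univ : Finset (Fin n)).powersetCard r, ∏ i ∈ s, X i

/-- The ideal defining `R_{n,k}`: generated by `x_i^k` and `e_r`, `n-k+1 ≤ r ≤ n`. -/
def Jnk (n k : ℕ) : Ideal (MvPolynomial (Fin n) ℚ) :=
  Ideal.span ((Set.range fun i : Fin n => (X i : MvPolynomial (Fin n) ℚ) ^ k) ∪
    {p | ∃ r, n - k + 1 ≤ r ∧ r ≤ n ∧ p = esymFin n r})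

/-- The map sending `x_i` (for `1 ≤ i ≤ n`) to the corresponding variable of
`ℚ[x_1, …, x_n]`, and all other variables to `0`. -/
def toFin (n : ℕ) : MvPolynomial ℕ ℚ →ₐ[ℚ] MvPolynomial (Fin n) ℚ :=
  aeval fun i => if h : 1 ≤ i ∧ i ≤ n then X (⟨i - 1, by omega⟩ : Fin n) else 0

/-- The quotient projection onto `R_{n,k}`. -/
def projNK (n k : ℕ) : MvPolynomial ℕ ℚ →ₐ[ℚ] (MvPolynomial (Fin n) ℚ ⧸ Jnk n k) :=
  (Ideal.Quotient.mkₐ ℚ (Jnk n k)).comp (toFin n)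

/-! ### Corners, insertions and the induction/extension operators -/

/-- `v` is an external corner of `μ`. -/
def IsCorner (μ : YoungDiagram) (v : ℕ × ℕ) : Prop :=
  v ∉ μ.cells ∧ ∃ ν : YoungDiagram, ν.cells = insert v μ.cells

/-- `S +̃ v := ev (ev S + v)`, where `+ v` places the entry `n + 1` in the box `v`. -/
def Sadd (n : ℕ) (S : Tab) (v : ℕ × ℕ) : Tab :=
  evac (n + 1) (Function.update (evac n S) v (n + 1))

/-- `δ^{S,v}`: `0` if `v` lies strictly below the row of `n` in `ev S`, and `1` otherwise. -/
def deltaSV (n : ℕ) (S : Tab) (v : ℕ × ℕ) : ℕ :=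
  if rowIdx (evac n S) n < v.1 then 0 else 1

/-- `h + δ·1_t`: add `δ` to the coordinate `t` of `h` when `t ≥ 1`; do nothing for `t = 0`. -/
def addAt (h : ℕ → ℕ) (t δ : ℕ) : ℕ → ℕ := fun r =>
  if r = t ∧ 1 ≤ t then h r + δ else h r

/-- The induction operator on a single summand:
`Ind_t V^S_h := ⊕_{v ∈ EC(λ)} V^{S +̃ v}_{h + δ^{S,v}·1_t}`. -/
def IndVSh (t n : ℕ) (μ : YoungDiagram) (S : Tab) (h : ℕ → ℕ) :
    Submodule ℚ (MvPolynomial ℕ ℚ) :=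
  ⨆ v : ℕ × ℕ, ⨆ _ : IsCorner μ v,
    VSh (n + 1) (insert v μ.cells) (Sadd n S v) (addAt h t (deltaSV n S v))

/-- The extension operator on a single summand:
`Ext V^S_h := ⊕_{v ∈ EC(λ), δ^{S,v} = 1} V^{S +̃ v}_h`. -/
def ExtVSh (n : ℕ) (μ : YoungDiagram) (S : Tab) (h : ℕ → ℕ) :
    Submodule ℚ (MvPolynomial ℕ ℚ) :=
  ⨆ v : ℕ × ℕ, ⨆ _ : IsCorner μ v ∧ deltaSV n S v = 1,
    VSh (n + 1) (insert v μ.cells) (Sadd n S v) h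

/-- `Ind_t R_{n,I}`, applied summand-by-summand to the decomposition of `R_{n,I}`. -/
def IndR (t n : ℕ) (I : Finset ℕ) : Submodule ℚ (MvPolynomial ℕ ℚ) :=
  ⨆ q : SIdx n I, IndVSh t n q.1.1 q.1.2 (hSI n I q.1.2)

/-- `Ext R_{n,I}`, applied summand-by-summand. -/
def ExtR (n : ℕ) (I : Finset ℕ) : Submodule ℚ (MvPolynomial ℕ ℚ) :=
  ⨆ q : SIdx n I, ExtVSh n q.1.1 q.1.2 (hSI n I q.1.2)

/-- `Ind_t R^hom_{n,I}`, applied summand-by-summand. -/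
def IndRhom (t n : ℕ) (I : Finset ℕ) : Submodule ℚ (MvPolynomial ℕ ℚ) :=
  ⨆ q : SIdx n I, IndVSh t n q.1.1 q.1.2 (hInd n I q.1.2)

/-- `Ext R^hom_{n,I}`, applied summand-by-summand. -/
def ExtRhom (n : ℕ) (I : Finset ℕ) : Submodule ℚ (MvPolynomial ℕ ℚ) :=
  ⨆ q : SIdx n I, ExtVSh n q.1.1 q.1.2 (hInd n I q.1.2)

/-- The lift `R̃_{n,k} = ⊕_{|I| = k-1} R_{n,I}` of the quotient `R_{n,k}`. -/
def Rtil (n k : ℕ) : Submodule ℚ (MvPolynomial ℕ ℚ) :=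
  ⨆ I : Finset ℕ, ⨆ _ : I ⊆ Finset.Ioo 0 n ∧ I.card + 1 = k, RnI n I

/-! ### The extended column group -/

/-- The length of column `c` of a tableau. -/
def colLenT (n : ℕ) (T : Tab) (c : ℕ) : ℕ :=
  ((Finset.range (n + 1)).filter fun r => T (r, c) ≠ 0).card

/-- `q_a`: the number of columns of length `> a` (columns of length `a` occupy the
`0`-indexed columns `q_a, …, q_a + t_a - 1`). -/
def qaT (n : ℕ) (T : Tab) (a : ℕ) : ℕ :=
  ((Finset.range (n + 1)).filter fun c => a < colLenT n T c).card

/-- `t_a`: the number of columns of length `a`. -/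
def taT (n : ℕ) (T : Tab) (a : ℕ) : ℕ :=
  ((Finset.range (n + 1)).filter fun c => colLenT n T c = a).card

/-- The function underlying the permutation `η_T`: the entry in row `j` of column `q_a + i`
is sent to the entry in row `j` of column `q_a + η(i)`; everything else is fixed. -/
def etaFun (n : ℕ) (T : Tab) (a : ℕ) (η : Equiv.Perm ℕ) : ℕ → ℕ := fun m =>
  let c := colIdx T m
  if 1 ≤ m ∧ m ≤ n ∧ qaT n T a ≤ c ∧ c < qaT n T a + taT n T a then
    T (rowIdx T m, qaT n T a + η (c - qaT n T a))
  else m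

/-- The set of the permutations `η_T` (over all `a ≥ 1` and all `η ∈ S_{t_a}`). -/
def etaSet (n : ℕ) (T : Tab) : Set (Equiv.Perm ℕ) :=
  {w | ∃ a, 1 ≤ a ∧ ∃ η : Equiv.Perm ℕ, (∀ i, taT n T a ≤ i → η i = i) ∧
    ⇑w = etaFun n T a η}

/-- The subgroup generated by the permutations `η_T` (a copy of `Π_a S_{t_a}`). -/
def etaSubgroup (n : ℕ) (T : Tab) : Subgroup (Equiv.Perm ℕ) :=
  Subgroup.closure (etaSet n T)

/-- The column group `C(T)` as a subgroup. -/
def colSubgroup (n : ℕ) (T : Tab) : Subgroup (Equiv.Perm ℕ) :=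
  Subgroup.closure (colGroupSet n T)

/-- The extended column group `C̃(T)`, generated by `C(T)` and the `η_T`. -/
def extColSubgroup (n : ℕ) (T : Tab) : Subgroup (Equiv.Perm ℕ) :=
  Subgroup.closure (colGroupSet n T ∪ etaSet n T)

/-- The sign of a permutation of `ℕ` supported on `{1, …, n}`. -/
def signOn (n : ℕ) (σ : Equiv.Perm ℕ) : ℤ :=
  if h : ∃ τ : Equiv.Perm (Fin n), embedPerm n τ = σ then
    (Equiv.Perm.sign h.choose : ℤ) else 0

/-! ### Semistandard tableaux, (generalized) cocharge tableaux -/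

/-- A semistandard filling of the given cells: rows weakly increase, columns strictly
increase (entries outside the cells are normalized to `0`). -/
def IsSSYTOn (cells : Finset (ℕ × ℕ)) (C : Tab) : Prop :=
  (∀ c ∉ cells, C c = 0) ∧
  (∀ c₁ ∈ cells, ∀ c₂ ∈ cells, c₁.1 = c₂.1 → c₁.2 ≤ c₂.2 → C c₁ ≤ C c₂) ∧
  (∀ c₁ ∈ cells, ∀ c₂ ∈ cells, c₁.2 = c₂.2 → c₁.1 < c₂.1 → C c₁ < C c₂)

/-- A generalized cocharge tableau with entries exactly `{0, …, k-1}`. -/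
def IsGCT (cells : Finset (ℕ × ℕ)) (C : Tab) (k : ℕ) : Prop :=
  IsSSYTOn cells C ∧ (∀ c ∈ cells, C c < k) ∧ ∀ h < k, ∃ c ∈ cells, C c = h

/-- The type of a generalized cocharge tableau: the set of cumulative multiplicities
`#{c : C c < h}` for `1 ≤ h ≤ k - 1`. -/
def gctType (cells : Finset (ℕ × ℕ)) (C : Tab) (k : ℕ) : Finset ℕ :=
  (Finset.Ico 1 k).image fun h => (cells.filter fun c => C c < h).card

/-- The standardization of a semistandard tableau: entries are replaced by `1, …, n`,
processing the values in increasing order and, for equal values, from left to right. -/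
def stdz (cells : Finset (ℕ × ℕ)) (C : Tab) : Tab := fun c =>
  if c ∈ cells then
    (cells.filter fun c' => C c' < C c ∨
      (C c' = C c ∧ (c'.2 < c.2 ∨ (c'.2 = c.2 ∧ c'.1 ≤ c.1)))).card
  else 0

/-- A cocharge tableau of shape `μ`: one of the form `ct S` for a standard `S`. -/
def IsCCT (μ : YoungDiagram) (C : Tab) : Prop :=
  ∃ S : Tab, IsStandard μ S ∧ ctTab μ.cells.card S = C

/-- `k` for a tableau: one more than the maximal entry. -/
def kOf (cells : Finset (ℕ × ℕ)) (C : Tab) : ℕ := cells.sup C + 1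

/-- `Dsp^c(C) := {n - i : i ∈ J}`, `J` the type of the cocharge tableau `C`. -/
def Dspc (n : ℕ) (cells : Finset (ℕ × ℕ)) (C : Tab) : Finset ℕ :=
  (gctType cells C (kOf cells C)).image fun i => n - i

/-- The entry sum `Σ(C)`. -/
def entrySum (cells : Finset (ℕ × ℕ)) (C : Tab) : ℕ := ∑ c ∈ cells, C c

/-- `C +̂ v := ct (ct⁻¹(C) +̃ v)`, where `ct⁻¹` is the standardization. -/
def Cadd (n : ℕ) (μ : YoungDiagram) (C : Tab) (v : ℕ × ℕ) : Tab :=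
  ctTab (n + 1) (Sadd n (stdz μ.cells C) v)

/-- The standard Young tableau `S⁰` of shape `μ` filling the rows consecutively. -/
def rowWordTab (μ : YoungDiagram) : Tab := fun c =>
  if c ∈ μ.cells then (∑ r ∈ Finset.range c.1, μ.rowLen r) + c.2 + 1 else 0

/-- The word of an ordered set partition: the blocks listed in order, each sorted
increasingly. -/
def opWord (k : ℕ) (B : ℕ → Finset ℕ) : List ℕ :=
  (List.range k).foldr (fun h acc => (B h).sort (· ≤ ·) ++ acc) []

/-- Renaming the variables of a power series along a permutation. -/
def permSeries (g : Equiv.Perm ℕ) (F : MvPowerSeries ℕ ℚ) : MvPowerSeries ℕ ℚ :=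
  fun m => F (Finsupp.mapDomain ⇑g⁻¹ m)



section Statement18Aux

/-- The `hSI` vector with an abstract "descent" set `D` in place of `Dsic n S`. -/
private def hvec (n : ℕ) (D I : Finset ℕ) : ℕ → ℕ := fun r =>
  if 1 ≤ r then ((I \ D).filter fun i => rIdxI n I i = r).card else 0

private lemma rIdxI_le_aux (n k : ℕ) (I : Finset ℕ) (hI : I ⊆ Finset.Ioo 0 n)
    (hIc : I.card = k - 1) (hk1 : 1 ≤ k) (hkn : k ≤ n) (i : ℕ) :
    rIdxI n I i ≤ n - k := by
  have h1 : (Finset.Ioo 0 n \ I).card = n - k := by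
    rw [Finset.card_sdiff_of_subset hI, Nat.card_Ioo, hIc]; omega
  unfold rIdxI
  calc ((Finset.Ioo 0 n \ I).filter fun j => j < i).card
      ≤ (Finset.Ioo 0 n \ I).card := Finset.card_filter_le _ _
    _ = n - k := h1

private lemma sum_hvec_eq (n k : ℕ) (D I : Finset ℕ) (hI : I ⊆ Finset.Ioo 0 n)
    (hIc : I.card = k - 1) (hk1 : 1 ≤ k) (hkn : k ≤ n) (a : ℕ) :
    ∑ s ∈ Finset.Icc (a + 1) (n - k), hvec n D I s
      = ((I \ D).filter fun i => a + 1 ≤ rIdxI n I i).card := by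
  classical
  have H : ((I \ D).filter fun i => a + 1 ≤ rIdxI n I i).card
      = ∑ s ∈ Finset.Icc (a + 1) (n - k),
          (((I \ D).filter fun i => a + 1 ≤ rIdxI n I i).filter
            fun i => rIdxI n I i = s).card := by
    refine Finset.card_eq_sum_card_fiberwise fun x hx => ?_
    simp only [Finset.mem_coe, Finset.mem_filter] at hx
    simp only [Finset.mem_coe, Finset.mem_Icc]
    exact ⟨hx.2, rIdxI_le_aux n k I hI hIc hk1 hkn x⟩
  rw [H]
  refine Finset.sum_congr rfl fun s hs => ?_
  simp only [Finset.mem_Icc] at hs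
  simp only [hvec, if_pos (show 1 ≤ s by omega)]
  rw [Finset.filter_filter]
  have heq : ((I \ D).filter fun i => a + 1 ≤ rIdxI n I i ∧ rIdxI n I i = s)
      = (I \ D).filter fun i => rIdxI n I i = s := by
    refine Finset.filter_congr fun i _ => ?_
    constructor
    · rintro ⟨_, h2⟩; exact h2
    · intro h2; exact ⟨by omega, h2⟩
  rw [heq]

private lemma split_card (n : ℕ) (D I : Finset ℕ) (a : ℕ) :
    ((I \ D).filter fun i => rIdxI n I i ≤ a).card
      + ((I \ D).filter fun i => a + 1 ≤ rIdxI n I i).card = (I \ D).card := by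
  classical
  have heq : ((I \ D).filter fun i => a + 1 ≤ rIdxI n I i)
      = (I \ D).filter fun i => ¬ rIdxI n I i ≤ a := by
    refine Finset.filter_congr fun i _ => ?_
    omega
  rw [heq, Finset.card_filter_add_card_filter_not
      (p := fun i => rIdxI n I i ≤ a) (s := I \ D)]

private lemma inj_key (n k : ℕ) (D : Finset ℕ) (hk1 : 1 ≤ k) (hkn : k ≤ n)
    (I I' : Finset ℕ)
    (hDI : D ⊆ I) (hI : I ⊆ Finset.Ioo 0 n) (hIc : I.card = k - 1)
    (hDI' : D ⊆ I') (hI' : I' ⊆ Finset.Ioo 0 n) (hIc' : I'.card = k - 1)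
    (hh : hvec n D I = hvec n D I')
    (j : ℕ) (hjI : j ∈ I) (hjI' : j ∉ I')
    (hmin : ∀ m, m < j → (m ∈ I ↔ m ∈ I')) : False := by
  classical
  set r := ((Finset.Ioo 0 n \ I').filter fun x => x < j).card with hrdef
  have hpre : (Finset.Ioo 0 n \ I).filter (fun x => x < j)
      = (Finset.Ioo 0 n \ I').filter (fun x => x < j) := by
    ext m
    simp only [Finset.mem_filter, Finset.mem_sdiff]
    constructor
    · rintro ⟨⟨h1, h2⟩, h3⟩
      exact ⟨⟨h1, fun hm => h2 ((hmin m h3).mpr hm)⟩, h3⟩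
    · rintro ⟨⟨h1, h2⟩, h3⟩
      exact ⟨⟨h1, fun hm => h2 ((hmin m h3).mp hm)⟩, h3⟩
  have hpreID : (I \ D).filter (fun x => x < j) = (I' \ D).filter (fun x => x < j) := by
    ext m
    simp only [Finset.mem_filter, Finset.mem_sdiff]
    constructor
    · rintro ⟨⟨h1, h2⟩, h3⟩; exact ⟨⟨(hmin m h3).mp h1, h2⟩, h3⟩
    · rintro ⟨⟨h1, h2⟩, h3⟩; exact ⟨⟨(hmin m h3).mpr h1, h2⟩, h3⟩
  have hjD : j ∉ D := fun h => hjI' (hDI' h)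
  have hjIoo : j ∈ Finset.Ioo 0 n := hI hjI
  have hb : (I' \ D).filter (fun i => rIdxI n I' i ≤ r)
      = (I' \ D).filter (fun x => x < j) := by
    refine Finset.filter_congr fun i hi => ?_
    simp only [Finset.mem_sdiff] at hi
    constructor
    · intro hle
      by_contra hge
      push_neg at hge
      have hne : i ≠ j := fun e => hjI' (e ▸ hi.1)
      have hsub : insert j ((Finset.Ioo 0 n \ I').filter fun x => x < j)
          ⊆ (Finset.Ioo 0 n \ I').filter fun x => x < i := by
        intro m hm
        simp only [Finset.mem_insert, Finset.mem_filter, Finset.mem_sdiff] at hm ⊢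
        rcases hm with rfl | ⟨⟨hm1, hm2⟩, hm3⟩
        · exact ⟨⟨hjIoo, hjI'⟩, by omega⟩
        · exact ⟨⟨hm1, hm2⟩, by omega⟩
      have hcard : r + 1 ≤ ((Finset.Ioo 0 n \ I').filter fun x => x < i).card := by
        have h1 := Finset.card_le_card hsub
        rw [Finset.card_insert_of_notMem (by simp)] at h1
        omega
      unfold rIdxI at hle
      omega
    · intro hlt
      have hsub : (Finset.Ioo 0 n \ I').filter (fun x => x < i)
          ⊆ (Finset.Ioo 0 n \ I').filter fun x => x < j := by
        intro m hm
        simp only [Finset.mem_filter] at hm ⊢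
        exact ⟨hm.1, by omega⟩
      have h1 := Finset.card_le_card hsub
      unfold rIdxI
      omega
  have hc : ((I \ D).filter fun x => x ≤ j) ⊆ (I \ D).filter fun i => rIdxI n I i ≤ r := by
    intro i hi
    simp only [Finset.mem_filter] at hi ⊢
    refine ⟨hi.1, ?_⟩
    have hsub : (Finset.Ioo 0 n \ I).filter (fun x => x < i)
        ⊆ (Finset.Ioo 0 n \ I).filter fun x => x < j := by
      intro m hm
      simp only [Finset.mem_filter] at hm ⊢
      have := hi.2
      exact ⟨hm.1, by omega⟩
    have h1 := Finset.card_le_card hsub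
    rw [hpre] at h1
    unfold rIdxI
    omega
  have hins : ((I \ D).filter fun x => x ≤ j)
      = insert j ((I \ D).filter fun x => x < j) := by
    ext m
    simp only [Finset.mem_filter, Finset.mem_insert, Finset.mem_sdiff]
    constructor
    · rintro ⟨⟨h1, h2⟩, h3⟩
      rcases eq_or_lt_of_le h3 with he | hl
      · exact Or.inl he
      · exact Or.inr ⟨⟨h1, h2⟩, hl⟩
    · rintro (rfl | ⟨⟨h1, h2⟩, h3⟩)
      · exact ⟨⟨hjI, hjD⟩, le_refl _⟩
      · exact ⟨⟨h1, h2⟩, le_of_lt h3⟩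
  have e1 : ((I \ D).filter fun x => x < j).card + 1
      ≤ ((I \ D).filter fun i => rIdxI n I i ≤ r).card := by
    have h1 := Finset.card_le_card hc
    rw [hins, Finset.card_insert_of_notMem (by simp)] at h1
    omega
  have hsumeq : ∑ s ∈ Finset.Icc (r + 1) (n - k), hvec n D I s
      = ∑ s ∈ Finset.Icc (r + 1) (n - k), hvec n D I' s := by rw [hh]
  have l2 := sum_hvec_eq n k D I hI hIc hk1 hkn r
  have l2' := sum_hvec_eq n k D I' hI' hIc' hk1 hkn r
  have sp := split_card n D I r
  have sp' := split_card n D I' r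
  have hMeq : (I \ D).card = (I' \ D).card := by
    rw [Finset.card_sdiff_of_subset hDI, Finset.card_sdiff_of_subset hDI', hIc, hIc']
  have f1 : ((I \ D).filter fun i => rIdxI n I i ≤ r).card
      = ((I' \ D).filter fun i => rIdxI n I' i ≤ r).card := by omega
  rw [hb, ← hpreID] at f1
  omega


private lemma bijOn_aux (n k : ℕ) (D : Finset ℕ) (hk1 : 1 ≤ k) (hkn : k ≤ n)
    (hDsub : D ⊆ Finset.Ioo 0 n) :
    Set.BijOn (hvec n D)
      {I : Finset ℕ | D ⊆ I ∧ I ⊆ Finset.Ioo 0 n ∧ I.card = k - 1}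
      {h : ℕ → ℕ | h 0 = 0 ∧ (∀ r, n - k < r → h r = 0) ∧
        ∑ r ∈ Finset.Icc 1 (n - k), h r < k - D.card} := by
  classical
  refine ⟨?_, ?_, ?_⟩
  · -- MapsTo
    rintro I ⟨hDI, hI, hIc⟩
    have hd : D.card ≤ k - 1 := hIc ▸ Finset.card_le_card hDI
    refine ⟨by simp [hvec], ?_, ?_⟩
    · intro r hr
      simp only [hvec, if_pos (show 1 ≤ r by omega)]
      rw [Finset.card_eq_zero, Finset.filter_eq_empty_iff]
      intro i _
      have := rIdxI_le_aux n k I hI hIc hk1 hkn i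
      omega
    · have l2 := sum_hvec_eq n k D I hI hIc hk1 hkn 0
      simp only [Nat.zero_add] at l2
      rw [l2]
      have hle := Finset.card_filter_le (I \ D) (fun i => 1 ≤ rIdxI n I i)
      have hMc : (I \ D).card = k - 1 - D.card := by
        rw [Finset.card_sdiff_of_subset hDI, hIc]
      omega
  · -- InjOn
    rintro I ⟨hDI, hI, hIc⟩ I' ⟨hDI', hI', hIc'⟩ hfeq
    by_contra hne
    have hT : ((I \ I') ∪ (I' \ I)).Nonempty := by
      rw [Finset.nonempty_iff_ne_empty]
      intro hE
      apply hne
      rw [Finset.union_eq_empty] at hE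
      exact Finset.Subset.antisymm (Finset.sdiff_eq_empty_iff_subset.mp hE.1)
        (Finset.sdiff_eq_empty_iff_subset.mp hE.2)
    set j := ((I \ I') ∪ (I' \ I)).min' hT with hj
    have hmin : ∀ m, m < j → (m ∈ I ↔ m ∈ I') := by
      intro m hm
      by_contra hc
      have hmem : m ∈ (I \ I') ∪ (I' \ I) := by
        simp only [Finset.mem_union, Finset.mem_sdiff]
        tauto
      have := Finset.min'_le _ m hmem
      omega
    have hjmem : j ∈ (I \ I') ∪ (I' \ I) := Finset.min'_mem _ hT
    simp only [Finset.mem_union, Finset.mem_sdiff] at hjmem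
    rcases hjmem with ⟨h1, h2⟩ | ⟨h1, h2⟩
    · exact inj_key n k D hk1 hkn I I' hDI hI hIc hDI' hI' hIc' hfeq j h1 h2 hmin
    · exact inj_key n k D hk1 hkn I' I hDI' hI' hIc' hDI hI hIc hfeq.symm j h1 h2
        (fun m hm => (hmin m hm).symm)
  · -- SurjOn
    intro hfun hmem
    obtain ⟨hh0, hhz, hhsum⟩ := hmem
    have hd1 : 0 < k - D.card := lt_of_le_of_lt (Nat.zero_le _) hhsum
    have hdk : D.card + 1 ≤ k := by omega
    have hdn : D.card ≤ n - 1 := by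
      have := Finset.card_le_card hDsub
      rw [Nat.card_Ioo] at this
      omega
    set Z := n - k with hZ
    set M := k - 1 - D.card with hM
    have hsum_le : ∑ s ∈ Finset.Icc 1 Z, hfun s ≤ M := by omega
    have hE : (Finset.Ioo 0 n \ D).card = M + Z := by
      rw [Finset.card_sdiff_of_subset hDsub, Nat.card_Ioo]
      omega
    set f := (Finset.Ioo 0 n \ D).orderEmbOfFin hE with hf
    set z : ℕ → ℕ := fun r => r + (M - ∑ s ∈ Finset.Icc r Z, hfun s) with hz
    set G : ℕ → ℕ := fun q => if hq : q - 1 < M + Z then f ⟨q - 1, hq⟩ else 0 with hG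
    have hzsub : ∀ r, 1 ≤ r → ∑ s ∈ Finset.Icc r Z, hfun s ≤ M := by
      intro r hr
      refine le_trans (Finset.sum_le_sum_of_subset ?_) hsum_le
      intro x hx
      simp only [Finset.mem_Icc] at hx ⊢
      omega
    have hstep : ∀ r, 1 ≤ r → r ≤ Z → z (r + 1) = z r + (1 + hfun r) := by
      intro r h1 h2
      have hins : Finset.Icc r Z = insert r (Finset.Icc (r + 1) Z) := by
        ext x
        simp only [Finset.mem_Icc, Finset.mem_insert]
        omega
      have hsplit : ∑ s ∈ Finset.Icc r Z, hfun s
          = hfun r + ∑ s ∈ Finset.Icc (r + 1) Z, hfun s := by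
        rw [hins, Finset.sum_insert (by simp only [Finset.mem_Icc]; omega)]
      have h3 := hzsub r h1
      have h4 := hzsub (r + 1) (by omega)
      simp only [hz]
      omega
    have hzZ1 : z (Z + 1) = Z + 1 + M := by
      simp only [hz]
      rw [Finset.Icc_eq_empty (by omega), Finset.sum_empty]
      omega
    have hmono : ∀ a b, 1 ≤ a → a < b → b ≤ Z + 1 → z a < z b := by
      intro a b ha
      induction b with
      | zero => intro h1 _; omega
      | succ b ih =>
        intro hab hbz
        rcases Nat.lt_or_ge a b with h' | h'
        · have hzb := hstep b (by omega) (by omega)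
          have := ih h' (by omega)
          omega
        · have hab' : a = b := by omega
          subst hab'
          have := hstep a ha (by omega)
          omega
    have hmono' : ∀ a b, 1 ≤ a → a ≤ b → b ≤ Z + 1 → z a ≤ z b := by
      intro a b ha hab hbz
      rcases eq_or_lt_of_le hab with rfl | hl
      · exact le_refl _
      · exact le_of_lt (hmono a b ha hl hbz)
    have hzlb : ∀ r, r ≤ z r := by intro r; simp only [hz]; omega
    have hzub : ∀ r, 1 ≤ r → r ≤ Z → z r ≤ M + Z := by
      intro r h1 h2
      have := hmono r (Z + 1) h1 (by omega) (le_refl _)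
      omega
    have hGmem : ∀ q, 1 ≤ q → q ≤ M + Z → G q ∈ Finset.Ioo 0 n \ D := by
      intro q h1 h2
      simp only [hG]
      rw [dif_pos (show q - 1 < M + Z by omega), hf]
      exact Finset.orderEmbOfFin_mem _ hE _
    have hGlt : ∀ q q', 1 ≤ q → q ≤ M + Z → 1 ≤ q' → q' ≤ M + Z →
        (G q < G q' ↔ q < q') := by
      intro q q' a1 a2 a3 a4
      simp only [hG]
      rw [dif_pos (show q - 1 < M + Z by omega), dif_pos (show q' - 1 < M + Z by omega),
        OrderEmbedding.lt_iff_lt, Fin.mk_lt_mk]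
      omega
    have hGinj : ∀ q q', 1 ≤ q → q ≤ M + Z → 1 ≤ q' → q' ≤ M + Z → G q = G q' → q = q' := by
      intro q q' a1 a2 a3 a4 he
      rcases lt_trichotomy q q' with hl | he' | hl
      · have := (hGlt q q' a1 a2 a3 a4).mpr hl; omega
      · exact he'
      · have := (hGlt q' q a3 a4 a1 a2).mpr hl; omega
    have hzin : ∀ r, 1 ≤ r → r ≤ Z → 1 ≤ z r ∧ z r ≤ M + Z := by
      intro r h1 h2
      exact ⟨le_trans h1 (hzlb r), hzub r h1 h2⟩
    set Jset := (Finset.Icc 1 Z).image (fun r => G (z r)) with hJset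
    have hJE : Jset ⊆ Finset.Ioo 0 n \ D := by
      intro x hx
      simp only [hJset, Finset.mem_image, Finset.mem_Icc] at hx
      obtain ⟨r, ⟨h1, h2⟩, rfl⟩ := hx
      exact hGmem _ (hzin r h1 h2).1 (hzin r h1 h2).2
    have hzinj : ∀ r r', 1 ≤ r → r ≤ Z → 1 ≤ r' → r' ≤ Z → z r = z r' → r = r' := by
      intro r r' a1 a2 a3 a4 he
      rcases lt_trichotomy r r' with hl | he' | hl
      · have := hmono r r' a1 hl (by omega); omega
      · exact he'
      · have := hmono r' r a3 hl (by omega); omega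
    have hinjz : Set.InjOn (fun r => G (z r)) ↑(Finset.Icc 1 Z) := by
      intro r hr r' hr' he
      simp only [Finset.coe_Icc, Set.mem_Icc] at hr hr'
      have he' : G (z r) = G (z r') := he
      have h1 := hGinj (z r) (z r') (hzin r hr.1 hr.2).1 (hzin r hr.1 hr.2).2
        (hzin r' hr'.1 hr'.2).1 (hzin r' hr'.1 hr'.2).2 he'
      exact hzinj r r' hr.1 hr.2 hr'.1 hr'.2 h1
    have hJcard : Jset.card = Z := by
      rw [hJset, Finset.card_image_of_injOn hinjz, Nat.card_Icc]
      omega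
    set I := Finset.Ioo 0 n \ Jset with hIdef
    have hJIoo : Jset ⊆ Finset.Ioo 0 n := fun x hx => (Finset.mem_sdiff.mp (hJE hx)).1
    have hDI : D ⊆ I := by
      intro m hm
      simp only [hIdef, Finset.mem_sdiff]
      refine ⟨hDsub hm, fun hc => ?_⟩
      have := hJE hc
      rw [Finset.mem_sdiff] at this
      exact this.2 hm
    have hIsub : I ⊆ Finset.Ioo 0 n := Finset.sdiff_subset
    have hIcard : I.card = k - 1 := by
      rw [hIdef, Finset.card_sdiff_of_subset hJIoo, Nat.card_Ioo, hJcard]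
      omega
    have hcomp : Finset.Ioo 0 n \ I = Jset := by
      rw [hIdef]
      ext x
      simp only [Finset.mem_sdiff]
      constructor
      · rintro ⟨h1, h2⟩
        by_contra hc
        exact h2 ⟨h1, hc⟩
      · intro hx
        exact ⟨hJIoo hx, fun hc => hc.2 hx⟩
    have hID : I \ D = (Finset.Ioo 0 n \ D) \ Jset := by
      rw [hIdef]
      ext x
      simp only [Finset.mem_sdiff]
      tauto
    have hrIdx : ∀ q, 1 ≤ q → q ≤ M + Z →
        rIdxI n I (G q) = ((Finset.Icc 1 Z).filter fun s => z s < q).card := by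
      intro q h1 h2
      unfold rIdxI
      rw [hcomp, hJset]
      have himg : ((Finset.Icc 1 Z).image fun r => G (z r)).filter (fun j => j < G q)
          = ((Finset.Icc 1 Z).filter fun s => z s < q).image fun r => G (z r) := by
        ext x
        simp only [Finset.mem_filter, Finset.mem_image, Finset.mem_Icc]
        constructor
        · rintro ⟨⟨r, ⟨hr1, hr2⟩, rfl⟩, hlt⟩
          exact ⟨r, ⟨⟨hr1, hr2⟩,
            (hGlt (z r) q (hzin r hr1 hr2).1 (hzin r hr1 hr2).2 h1 h2).mp hlt⟩, rfl⟩
        · rintro ⟨r, ⟨⟨hr1, hr2⟩, hlt⟩, rfl⟩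
          exact ⟨⟨r, ⟨hr1, hr2⟩, rfl⟩,
            (hGlt (z r) q (hzin r hr1 hr2).1 (hzin r hr1 hr2).2 h1 h2).mpr hlt⟩
      rw [himg]
      exact Finset.card_image_of_injOn
        (Set.InjOn.mono (fun x hx => by
          simp only [Finset.coe_filter, Set.mem_setOf_eq] at hx
          simp only [Finset.mem_coe]
          exact hx.1) hinjz)
    have hfilter_eq : ∀ r q, 1 ≤ r → r ≤ Z → z r < q → q < z (r + 1) →
        ((Finset.Icc 1 Z).filter fun s => z s < q) = Finset.Icc 1 r := by
      intro r q h1 h2 h3 h4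
      ext s
      simp only [Finset.mem_filter, Finset.mem_Icc]
      constructor
      · rintro ⟨⟨hs1, hs2⟩, hsq⟩
        refine ⟨hs1, ?_⟩
        by_contra hc
        have := hmono' (r + 1) s (by omega) (by omega) (by omega)
        omega
      · rintro ⟨hs1, hs2⟩
        have := hmono' s r hs1 hs2 (by omega)
        exact ⟨⟨hs1, by omega⟩, by omega⟩
    have hcount₁ : ∀ r q, 1 ≤ r → r ≤ Z → z r < q → q < z (r + 1) →
        ((Finset.Icc 1 Z).filter fun s => z s < q).card = r := by
      intro r q h1 h2 h3 h4
      rw [hfilter_eq r q h1 h2 h3 h4, Nat.card_Icc]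
      omega
    have hcount₂ : ∀ r q, 1 ≤ r → r ≤ Z → 1 ≤ q → q ≤ M + Z →
        (∀ s, 1 ≤ s → s ≤ Z → z s ≠ q) →
        ((Finset.Icc 1 Z).filter fun s => z s < q).card = r →
        z r < q ∧ q < z (r + 1) := by
      intro r q h1 h2 hq1 hq2 hnot hcard
      constructor
      · by_contra hc
        push_neg at hc
        have hlt : q < z r := lt_of_le_of_ne hc (fun e => hnot r h1 h2 e.symm)
        have hsub : ((Finset.Icc 1 Z).filter fun s => z s < q) ⊆ Finset.Icc 1 (r - 1) := by
          intro s hs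
          simp only [Finset.mem_filter, Finset.mem_Icc] at hs ⊢
          refine ⟨hs.1.1, ?_⟩
          by_contra hc2
          push_neg at hc2
          have := hmono' r s h1 (by omega) (by omega)
          omega
        have := Finset.card_le_card hsub
        rw [Nat.card_Icc] at this
        omega
      · by_contra hc
        push_neg at hc
        rcases eq_or_lt_of_le h2 with hrZ | hrZ
        · rw [hrZ] at hc
          omega
        · have hne : z (r + 1) ≠ q := hnot (r + 1) (by omega) (by omega)
          have hlt : z (r + 1) < q := lt_of_le_of_ne hc hne
          have hsub : Finset.Icc 1 (r + 1) ⊆ (Finset.Icc 1 Z).filter fun s => z s < q := by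
            intro s hs
            simp only [Finset.mem_Icc] at hs
            simp only [Finset.mem_filter, Finset.mem_Icc]
            have := hmono' s (r + 1) hs.1 hs.2 (by omega)
            exact ⟨⟨hs.1, by omega⟩, by omega⟩
          have := Finset.card_le_card hsub
          rw [Nat.card_Icc] at this
          omega
    have hmain : ∀ r, 1 ≤ r → r ≤ Z →
        ((I \ D).filter fun i => rIdxI n I i = r)
          = (Finset.Ioo (z r) (z (r + 1))).image G := by
      intro r h1 h2
      ext i
      simp only [Finset.mem_image, Finset.mem_Ioo]
      constructor
      · intro hi
        rw [Finset.mem_filter, hID, Finset.mem_sdiff] at hi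
        obtain ⟨⟨hiE, hiJ⟩, hir⟩ := hi
        have hrange : i ∈ Set.range f := by
          rw [hf, Finset.range_orderEmbOfFin]
          exact Finset.mem_coe.mpr hiE
        obtain ⟨p, hp⟩ := hrange
        have hq2 : (p : ℕ) + 1 ≤ M + Z := p.isLt
        have hGq : G ((p : ℕ) + 1) = i := by
          simp only [hG]
          rw [dif_pos (show (p : ℕ) + 1 - 1 < M + Z by omega), ← hp]
          exact congrArg (⇑f) (Fin.ext (by simp))
        have hnot : ∀ s, 1 ≤ s → s ≤ Z → z s ≠ (p : ℕ) + 1 := by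
          intro s hs1 hs2 he
          apply hiJ
          rw [hJset]
          refine Finset.mem_image.mpr ⟨s, Finset.mem_Icc.mpr ⟨hs1, hs2⟩, ?_⟩
          rw [he, hGq]
        have hcnt : ((Finset.Icc 1 Z).filter fun s => z s < (p : ℕ) + 1).card = r := by
          rw [← hrIdx ((p : ℕ) + 1) (by omega) hq2, hGq]
          exact hir
        obtain ⟨ha, hb2⟩ := hcount₂ r ((p : ℕ) + 1) h1 h2 (by omega) hq2 hnot hcnt
        exact ⟨(p : ℕ) + 1, ⟨ha, hb2⟩, hGq⟩
      · rintro ⟨q, ⟨hq1, hq2⟩, rfl⟩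
        have hzr1 : 1 ≤ z r := le_trans h1 (hzlb r)
        have hq1' : 1 ≤ q := by omega
        have hup : z (r + 1) ≤ Z + 1 + M := by
          have := hmono' (r + 1) (Z + 1) (by omega) (by omega) (le_refl _)
          omega
        have hq2' : q ≤ M + Z := by omega
        have hnotJ : G q ∉ Jset := by
          intro hc
          rw [hJset] at hc
          simp only [Finset.mem_image, Finset.mem_Icc] at hc
          obtain ⟨s, ⟨hs1, hs2⟩, he⟩ := hc
          have hzs := hGinj (z s) q (hzin s hs1 hs2).1 (hzin s hs1 hs2).2 hq1' hq2' he
          rcases le_or_gt s r with h' | h'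
          · have := hmono' s r hs1 h' (by omega)
            omega
          · have := hmono' (r + 1) s (by omega) (by omega) (by omega)
            omega
        rw [Finset.mem_filter, hID, Finset.mem_sdiff]
        refine ⟨⟨hGmem q hq1' hq2', hnotJ⟩, ?_⟩
        rw [hrIdx q hq1' hq2']
        exact hcount₁ r q h1 h2 hq1 hq2
    refine ⟨I, ⟨hDI, hIsub, hIcard⟩, ?_⟩
    funext r
    by_cases hr1 : 1 ≤ r
    · by_cases hrZ : r ≤ Z
      · have hup : z (r + 1) ≤ Z + 1 + M := by
          have := hmono' (r + 1) (Z + 1) (by omega) (by omega) (le_refl _)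
          omega
        have hzr1 : 1 ≤ z r := le_trans hr1 (hzlb r)
        have hinjG : Set.InjOn G ↑(Finset.Ioo (z r) (z (r + 1))) := by
          intro q hq q' hq' he
          simp only [Finset.coe_Ioo, Set.mem_Ioo] at hq hq'
          exact hGinj q q' (by omega) (by omega) (by omega) (by omega) he
        simp only [hvec, if_pos hr1]
        rw [hmain r hr1 hrZ, Finset.card_image_of_injOn hinjG, Nat.card_Ioo]
        have := hstep r hr1 hrZ
        omega
      · have hfe : ((I \ D).filter fun i => rIdxI n I i = r) = ∅ := by
          rw [Finset.filter_eq_empty_iff]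
          intro i _
          have hle : rIdxI n I i ≤ Z := by
            unfold rIdxI
            calc ((Finset.Ioo 0 n \ I).filter fun j => j < i).card
                ≤ (Finset.Ioo 0 n \ I).card := Finset.card_filter_le _ _
              _ = Z := by rw [hcomp, hJcard]
          omega
        simp only [hvec, if_pos hr1, hfe, Finset.card_empty]
        exact (hhz r (by omega)).symm
    · have hr0 : r = 0 := by omega
      subst hr0
      simp only [hvec, if_neg (by omega : ¬ (1:ℕ) ≤ 0)]
      exact hh0.symm

end Statement18Aux

/-- The map `I ↦ h^S_I` is a bijection from
`{I : Dsi^c(S) ⊆ I ⊆ {1,…,n-1}, |I| = k-1}` onto the set `H^S_k` of vectors `h` with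
`h_r = 0` for `r > n-k` and `Σ_{r=1}^{n-k} h_r < k - |Dsi^c(S)|`. -/
theorem statement_18 (n k : ℕ) (μ : YoungDiagram) (hμ : μ.cells.card = n) (S : Tab)
    (hS : IsStandard μ S) (hk₁ : 1 ≤ k) (hk₂ : k ≤ n) :
    Set.BijOn (fun I => hSI n I S)
      {I : Finset ℕ | Dsic n S ⊆ I ∧ I ⊆ Finset.Ioo 0 n ∧ I.card = k - 1}
      {h : ℕ → ℕ | h 0 = 0 ∧ (∀ r, n - k < r → h r = 0) ∧
        ∑ r ∈ Finset.Icc 1 (n - k), h r < k - (Dsic n S).card} := by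
  have hDsub : Dsic n S ⊆ Finset.Ioo 0 n := by
    intro x hx
    simp only [Dsic, DsiSet, Finset.mem_image, Finset.mem_filter, Finset.mem_Ioo] at hx
    obtain ⟨i, ⟨⟨hi1, hi2⟩, _⟩, rfl⟩ := hx
    simp only [Finset.mem_Ioo]
    omega
  exact bijOn_aux n k (Dsic n S) hk₁ hk₂ hDsub

end HigherSpecht
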